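/- Let n ≥ 1 and let Ω ⊆ ℝⁿ be an open set with finite positive Lebesgue measure. Let g₁, g₂ : Ω → Sym(n,ℝ) be continuous maps into the real symmetric n×n matrices such that g₁(x) and g₂(x) are positive definite for every x ∈ Ω and g₁(x) − g₂(x) is positive semidefinite for every x ∈ Ω (i.e. g₁ ≥ g₂ as quadratic forms). If ∫_Ω √(det g₁(x)) dx = ∫_Ω √(det g₂(x)) dx < ∞, then g₁(x) = g₂(x) for every x ∈ Ω. -/

import Mathlib

open MeasureTheory

/-- Key matrix lemma: for `A` positive definite and `P` positive semidefinite,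
`det A ≤ det (A + P)`, with equality iff `P = 0`. -/
lemma det_add_posSemidef_aux {n : ℕ} (A P : Matrix (Fin n) (Fin n) ℝ)
    (hA : A.PosDef) (hP : P.PosSemidef) :
    A.det ≤ (A + P).det ∧ ((A + P).det = A.det → P = 0) := by
  classical
  set M := (open scoped MatrixOrder in CFC.sqrt A) with hMdef
  have hM : M.PosSemidef := (open scoped MatrixOrder in Matrix.nonneg_iff_posSemidef.mp (CFC.sqrt_nonneg A))
  have hMM : M * M = A := (open scoped MatrixOrder in CFC.sqrt_mul_sqrt_self A hA.posSemidef.nonneg)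
  have hdetA : 0 < A.det := hA.det_pos
  have hdetM : M.det * M.det = A.det := by rw [← Matrix.det_mul, hMM]
  have hMdetne : M.det ≠ 0 := by
    intro h; rw [h, mul_zero] at hdetM; exact hdetA.ne' hdetM.symm
  have hMunit : IsUnit M.det := isUnit_iff_ne_zero.mpr hMdetne
  have hMinv_herm : M⁻¹.IsHermitian := hM.1.inv
  set Q := M⁻¹ * P * M⁻¹ with hQdef
  have hQ : Q.PosSemidef := by
    have := hP.conjTranspose_mul_mul_same M⁻¹
    rwa [hMinv_herm.eq] at this
  have hPMQM : P = M * Q * M := by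
    rw [hQdef, show M * (M⁻¹ * P * M⁻¹) * M = (M * M⁻¹) * P * (M⁻¹ * M) by
        simp only [mul_assoc],
      Matrix.mul_nonsing_inv _ hMunit, Matrix.nonsing_inv_mul _ hMunit, one_mul, mul_one]
  have hAP : A + P = M * (1 + Q) * M := by
    rw [mul_add, mul_one, add_mul, hMM]
    rw [← hPMQM]
  have hdet : (A + P).det = A.det * (1 + Q).det := by
    rw [hAP, Matrix.det_mul, Matrix.det_mul, mul_comm, ← mul_assoc, mul_comm M.det, hdetM]
  -- spectral decomposition of Q
  have hQh : Q.IsHermitian := hQ.1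
  set U : Matrix (Fin n) (Fin n) ℝ := (hQh.eigenvectorUnitary : Matrix (Fin n) (Fin n) ℝ)
    with hU
  have hUU : U * star U = 1 := Matrix.mem_unitaryGroup_iff.mp hQh.eigenvectorUnitary.2
  have hspec : Q = U * Matrix.diagonal (RCLike.ofReal ∘ hQh.eigenvalues) * star U :=
    hQh.spectral_theorem
  have hd : Matrix.diagonal (fun i => 1 + hQh.eigenvalues i)
      = (1 : Matrix (Fin n) (Fin n) ℝ) + Matrix.diagonal (RCLike.ofReal ∘ hQh.eigenvalues) := by
    rw [← Matrix.diagonal_one, Matrix.diagonal_add]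
    congr 1
  have h1Q : 1 + Q = U * Matrix.diagonal (fun i => 1 + hQh.eigenvalues i) * star U := by
    rw [hd, mul_add, mul_one, add_mul, hUU, ← hspec]
  have hdet1Q : (1 + Q).det = ∏ i, (1 + hQh.eigenvalues i) := by
    rw [h1Q, Matrix.det_mul_right_comm, hUU, one_mul, Matrix.det_diagonal]
  have hfac : ∀ i, (1:ℝ) ≤ 1 + hQh.eigenvalues i := fun i =>
    le_add_of_nonneg_right (hQ.eigenvalues_nonneg i)
  have hprod1 : (1:ℝ) ≤ (1 + Q).det := by
    rw [hdet1Q]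
    calc (1:ℝ) = ∏ _i : Fin n, 1 := by simp
    _ ≤ ∏ i, (1 + hQh.eigenvalues i) :=
        Finset.prod_le_prod (fun i _ => zero_le_one) (fun i _ => hfac i)
  constructor
  · rw [hdet]; nlinarith
  · intro h
    rw [hdet] at h
    have hdet1 : (1 + Q).det = 1 := mul_left_cancel₀ hdetA.ne' (by rw [h, mul_one])
    rw [hdet1Q] at hdet1
    have key : ∀ j, hQh.eigenvalues j = 0 := by
      intro j
      have h1 : (1:ℝ) ≤ ∏ i ∈ Finset.univ.erase j, (1 + hQh.eigenvalues i) := by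
        calc (1:ℝ) = ∏ _i ∈ Finset.univ.erase j, 1 := by simp
        _ ≤ _ := Finset.prod_le_prod (fun i _ => zero_le_one) (fun i _ => hfac i)
      have h2 : (1 + hQh.eigenvalues j)
          * ∏ i ∈ Finset.univ.erase j, (1 + hQh.eigenvalues i) = 1 := by
        exact (Finset.mul_prod_erase Finset.univ (fun i => 1 + hQh.eigenvalues i)
          (Finset.mem_univ j)).trans hdet1
      have h3 := hQ.eigenvalues_nonneg j
      nlinarith
    have hQ0 : Q = 0 := by
      rw [hspec]
      have hz : (RCLike.ofReal ∘ hQh.eigenvalues : Fin n → ℝ) = fun _ => 0 := by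
        funext i; simpa using key i
      rw [hz]
      simp
    rw [hPMQM, hQ0, mul_zero, zero_mul]

/-- Rigidity in local coordinates: if two continuous fields of positive definite symmetric
matrices on an open set `Ω ⊆ ℝⁿ` of finite positive measure satisfy `g₁ ≥ g₂` (i.e.
`g₁ x - g₂ x` is positive semidefinite) and have equal (finite) Riemannian volumes
`∫_Ω √(det gᵢ)`, then `g₁ = g₂` on `Ω`. -/
theorem rigidity_volume_above_distance_below {n : ℕ} (hn : 1 ≤ n)
    (Ω : Set (EuclideanSpace ℝ (Fin n))) (hΩopen : IsOpen Ω)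
    (hΩpos : 0 < volume Ω) (hΩfin : volume Ω < ⊤)
    (g₁ g₂ : EuclideanSpace ℝ (Fin n) → Matrix (Fin n) (Fin n) ℝ)
    (hc₁ : ContinuousOn g₁ Ω) (hc₂ : ContinuousOn g₂ Ω)
    (hsym₁ : ∀ x ∈ Ω, (g₁ x).IsSymm) (hsym₂ : ∀ x ∈ Ω, (g₂ x).IsSymm)
    (hpd₁ : ∀ x ∈ Ω, (g₁ x).PosDef) (hpd₂ : ∀ x ∈ Ω, (g₂ x).PosDef)
    (hle : ∀ x ∈ Ω, (g₁ x - g₂ x).PosSemidef)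
    (hint₁ : IntegrableOn (fun x => Real.sqrt (g₁ x).det) Ω volume)
    (hint₂ : IntegrableOn (fun x => Real.sqrt (g₂ x).det) Ω volume)
    (heq : ∫ x in Ω, Real.sqrt (g₁ x).det = ∫ x in Ω, Real.sqrt (g₂ x).det) :
    ∀ x ∈ Ω, g₁ x = g₂ x := by
  -- pointwise determinant inequality
  have hdetle : ∀ x ∈ Ω, (g₂ x).det ≤ (g₁ x).det := by
    intro x hx
    have := (det_add_posSemidef_aux (g₂ x) (g₁ x - g₂ x) (hpd₂ x hx) (hle x hx)).1
    rwa [add_sub_cancel] at this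
  -- the difference function
  set f : EuclideanSpace ℝ (Fin n) → ℝ :=
    fun x => Real.sqrt (g₁ x).det - Real.sqrt (g₂ x).det with hf
  have hf_nonneg : ∀ x ∈ Ω, 0 ≤ f x := fun x hx =>
    sub_nonneg.mpr (Real.sqrt_le_sqrt (hdetle x hx))
  have hf_cont : ContinuousOn f Ω :=
    ((Real.continuous_sqrt.comp continuous_id.matrix_det).comp_continuousOn hc₁).sub
      ((Real.continuous_sqrt.comp continuous_id.matrix_det).comp_continuousOn hc₂)
  have hf_int : IntegrableOn f Ω volume := hint₁.sub hint₂
  have hf_integral : ∫ x in Ω, f x = 0 := by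
    rw [hf]
    rw [integral_sub hint₁ hint₂, heq, sub_self]
  have hf_ae : f =ᵐ[volume.restrict Ω] 0 := by
    rw [← setIntegral_eq_zero_iff_of_nonneg_ae ?_ hf_int]
    · exact hf_integral
    · filter_upwards [ae_restrict_mem hΩopen.measurableSet] with x hx using hf_nonneg x hx
  -- f vanishes identically on Ω by continuity
  have hf_zero : ∀ x ∈ Ω, f x = 0 := by
    intro x hx
    by_contra hne
    have hpos : 0 < f x := lt_of_le_of_ne (hf_nonneg x hx) (Ne.symm hne)
    set U := Ω ∩ f ⁻¹' Set.Ioi 0 with hUdef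
    have hUopen : IsOpen U := hf_cont.isOpen_inter_preimage hΩopen isOpen_Ioi
    have hxU : x ∈ U := ⟨hx, hpos⟩
    have hUpos : 0 < volume U := hUopen.measure_pos volume ⟨x, hxU⟩
    have hnull : volume.restrict Ω {y | f y ≠ 0} = 0 := by
      have h := ae_iff.mp hf_ae
      simpa using h
    have : volume U ≤ 0 := by
      calc volume U = volume (U ∩ Ω) := by rw [Set.inter_eq_left.mpr Set.inter_subset_left]
      _ = volume.restrict Ω U := (Measure.restrict_apply' hΩopen.measurableSet).symm
      _ ≤ volume.restrict Ω {y | f y ≠ 0} := by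
          apply measure_mono
          rintro y ⟨_, hy⟩
          exact ne_of_gt hy
      _ = 0 := hnull
    exact absurd (le_antisymm this zero_le) hUpos.ne'
  -- conclude pointwise
  intro x hx
  have hdet_eq : (g₁ x).det = (g₂ x).det := by
    have h0 : Real.sqrt (g₁ x).det - Real.sqrt (g₂ x).det = 0 := hf_zero x hx
    have hsq : Real.sqrt (g₁ x).det = Real.sqrt (g₂ x).det := by linarith
    have h1 := (hpd₁ x hx).det_pos
    have h2 := (hpd₂ x hx).det_pos
    rw [← Real.sq_sqrt h1.le, ← Real.sq_sqrt h2.le, hsq]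
  have := (det_add_posSemidef_aux (g₂ x) (g₁ x - g₂ x) (hpd₂ x hx) (hle x hx)).2
  rw [add_sub_cancel] at this
  have hP0 := this hdet_eq
  have := sub_eq_zero.mp hP0
  exact this
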